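/- arXiv:1502.05657 — 2 statements merged into one kernel-verified Lean document; each statement's English description precedes it below -/
import Mathlib

section
/- Let F be a field with char F ≠ 2 and let n ≥ 1. With respect to the Jordan product X ∙ Y := (1/2)(XY + YX), the matrices m_{ij} satisfy the Matsuo multiplication rules: (i) m_{ij} ∙ m_{ij} = m_{ij} for all i ≠ j; (ii) m_{ij} ∙ m_{kl} = 0 whenever {i,j} ∩ {k,l} = ∅; (iii) m_{ij} ∙ m_{jk} = (1/4)(m_{ij} + m_{jk} − m_{ik}) for all pairwise distinct i, j, k. -/
open Matrix

/-- The projection matrix `m_{ij} = (1/2)(E_{ii} − E_{ij} − E_{ji} + E_{jj})`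
onto the span of the root `v_i − v_j` of the root system `A_{n−1}`. -/
noncomputable def msym (F : Type*) [Field F] {n : ℕ} (i j : Fin n) :
    Matrix (Fin n) (Fin n) F :=
  (2⁻¹ : F) • (Matrix.single i i 1 - Matrix.single i j 1 -
    Matrix.single j i 1 + Matrix.single j j 1)

/-- With respect to the Jordan product `X ∙ Y = (1/2)(XY + YX)`, the matrices
`m_{ij}` satisfy the Matsuo multiplication rules: (i) `m_{ij} ∙ m_{ij} = m_{ij}`;
(ii) `m_{ij} ∙ m_{kl} = 0` when `{i,j} ∩ {k,l} = ∅`;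
(iii) `m_{ij} ∙ m_{jk} = (1/4)(m_{ij} + m_{jk} − m_{ik})` for pairwise distinct `i, j, k`. -/
theorem stmt_2 (F : Type*) [Field F] (h2 : (2 : F) ≠ 0) (n : ℕ) (hn : 1 ≤ n) :
    (∀ i j : Fin n, i ≠ j →
      (2⁻¹ : F) • (msym F i j * msym F i j + msym F i j * msym F i j) = msym F i j) ∧
    (∀ i j k l : Fin n, i ≠ j → k ≠ l → i ≠ k → i ≠ l → j ≠ k → j ≠ l →
      (2⁻¹ : F) • (msym F i j * msym F k l + msym F k l * msym F i j) = 0) ∧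
    (∀ i j k : Fin n, i ≠ j → j ≠ k → i ≠ k →
      (2⁻¹ : F) • (msym F i j * msym F j k + msym F j k * msym F i j) =
        (4⁻¹ : F) • (msym F i j + msym F j k - msym F i k)) := by
  have h4 : (4:F)⁻¹ = 2⁻¹ * 2⁻¹ := by
    rw [← mul_inv]; norm_num
  refine ⟨?_, ?_, ?_⟩
  · intro i j hij
    simp only [msym, smul_mul_assoc, mul_smul_comm, smul_add, smul_sub, sub_mul, add_mul,
      mul_sub, mul_add, Matrix.single_mul_single_same, Matrix.single_mul_single_of_ne,
      mul_one, hij, hij.symm, ne_eq, not_false_iff]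
    match_scalars <;> (field_simp; try ring_nf; try tauto)
  · intro i j k l hij hkl hik hil hjk hjl
    simp only [msym, smul_mul_assoc, mul_smul_comm, smul_add, smul_sub, sub_mul, add_mul,
      mul_sub, mul_add, Matrix.single_mul_single_same, Matrix.single_mul_single_of_ne,
      mul_one, hij, hij.symm, hkl, hkl.symm, hik, hik.symm, hil, hil.symm, hjk, hjk.symm,
      hjl, hjl.symm, ne_eq, not_false_iff]
    module
  · intro i j k hij hjk hik
    simp only [msym, h4, smul_mul_assoc, mul_smul_comm, smul_add, smul_sub, sub_mul, add_mul,
      mul_sub, mul_add, Matrix.single_mul_single_same, Matrix.single_mul_single_of_ne,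
      mul_one, hij, hij.symm, hjk, hjk.symm, hik, hik.symm, ne_eq, not_false_iff]
    match_scalars <;> (field_simp; try ring_nf; try tauto)
end

section
/- Let F be a field with char F ≠ 2 and let n ≥ 1. Let A be the F-algebra whose underlying vector space is the free F-module on the set of 2-element subsets of {1,…,n}, with commutative bilinear multiplication determined by: {i,j}·{i,j} = {i,j}; {i,j}·{k,l} = 0 whenever {i,j} ∩ {k,l} = ∅; and {i,j}·{j,k} = (1/4)({i,j} + {j,k} − {i,k}) for pairwise distinct i, j, k. (This is the Matsuo algebra M_{1/2}(Sym(n), D) for D the class of transpositions of Sym(n).) Then the F-linear map sending the basis element {i,j} to m_{ij} is an isomorphism of F-algebras from A onto the algebra of symmetric zero-sum n×n matrices over F with the Jordan product X ∙ Y = (1/2)(XY + YX). In particular, A is a Jordan algebra, i.e. it satisfies (ab)(aa) = a(b(aa)) for all a, b. -/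
open Matrix

/-- The Matsuo algebra `M_{1/2}(Sym(n), D)`, realized on the free `F`-module on the set of
2-element subsets of `{1,…,n}`: the commutative bilinear multiplication is determined by
`s·s = s`, `s·t = 0` if `s ∩ t = ∅`, and `{i,j}·{j,k} = (1/4)({i,j} + {j,k} − {i,k})`
for pairwise distinct `i, j, k` (here `{i,k}` is the symmetric difference `s ∆ t`). -/
noncomputable def pairMul (F : Type*) [Field F] (n : ℕ)
    (x y : {s : Finset (Fin n) // s.card = 2} → F) :
    {s : Finset (Fin n) // s.card = 2} → F :=
  ∑ s : {s : Finset (Fin n) // s.card = 2}, ∑ t : {s : Finset (Fin n) // s.card = 2},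
    (x s * y t) •
      (if s = t then Pi.single s (1 : F)
       else if (s : Finset (Fin n)) ∩ (t : Finset (Fin n)) = ∅ then
         (0 : {s : Finset (Fin n) // s.card = 2} → F)
       else (4⁻¹ : F) • (Pi.single s (1 : F) + Pi.single t (1 : F) -
         fun r : {s : Finset (Fin n) // s.card = 2} =>
           if (r : Finset (Fin n)) = symmDiff (s : Finset (Fin n)) (t : Finset (Fin n))
           then (1 : F) else 0))

/-- The matrix `m_{ij}` attached to a 2-element subset `{i,j}`. -/
noncomputable def msymOf (F : Type*) [Field F] {n : ℕ}
    (s : {s : Finset (Fin n) // s.card = 2}) : Matrix (Fin n) (Fin n) F :=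
  msym F (s.1.min' (Finset.card_pos.mp (by rw [s.2]; norm_num)))
    (s.1.max' (Finset.card_pos.mp (by rw [s.2]; norm_num)))

lemma std_apply (F : Type*) [Field F] {n : ℕ} (i j a b : Fin n) :
    Matrix.single i j (1 : F) a b
      = (if a = i then (1:F) else 0) * (if b = j then (1:F) else 0) := by
  simp only [Matrix.single, of_apply]
  by_cases h1 : a = i <;> by_cases h2 : b = j <;> subst_vars <;> simp_all [eq_comm]

lemma msym_eq (F : Type*) [Field F] {n : ℕ} (i j : Fin n) :
    msym F i j = (2⁻¹ : F) •
      vecMulVec (Pi.single i 1 - Pi.single j 1) (Pi.single i 1 - Pi.single j 1) := by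
  ext a b
  simp only [msym, vecMulVec_apply, Pi.single_apply, Matrix.smul_apply, Matrix.add_apply,
    Matrix.sub_apply, Pi.sub_apply, smul_eq_mul, std_apply]
  ring

lemma msym_comm (F : Type*) [Field F] {n : ℕ} (i j : Fin n) : msym F i j = msym F j i := by
  ext a b
  simp only [msym, Matrix.smul_apply, Matrix.add_apply, Matrix.sub_apply, smul_eq_mul, std_apply]
  ring

-- two distinct elements of a card-2 set
lemma card2_min_max {n : ℕ} (s : Finset (Fin n)) (hs : s.card = 2) :
    ∃ h : s.Nonempty, s.min' h ≠ s.max' h ∧ s = {s.min' h, s.max' h} := by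
  have h : s.Nonempty := Finset.card_pos.mp (by rw [hs]; norm_num)
  obtain ⟨a, b, hab, rfl⟩ := Finset.card_eq_two.mp hs
  refine ⟨h, ?_, ?_⟩
  · exact Finset.min'_lt_max'_of_card _ (by rw [hs]; norm_num) |>.ne
  · have h1 := Finset.min'_mem _ h
    have h2 := Finset.max'_mem _ h
    have hne : ({a, b} : Finset (Fin n)).min' h ≠ ({a,b} : Finset (Fin n)).max' h :=
      Finset.min'_lt_max'_of_card _ (by rw [hs]; norm_num) |>.ne
    simp only [Finset.mem_insert, Finset.mem_singleton] at h1 h2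
    rcases h1 with h1 | h1 <;> rcases h2 with h2 | h2 <;>
      simp_all [Finset.pair_comm]

lemma msymOf_eq (F : Type*) [Field F] {n : ℕ} (s : {s : Finset (Fin n) // s.card = 2})
    (i j : Fin n) (hij : i ≠ j) (hs : s.1 = {i, j}) : msymOf F s = msym F i j := by
  obtain ⟨h, hne, hrepr⟩ := card2_min_max s.1 s.2
  have : ({s.1.min' h, s.1.max' h} : Finset (Fin n)) = {i, j} := by rw [← hrepr, hs]
  have hm : s.1.min' h ∈ ({i, j} : Finset (Fin n)) := by rw [← this]; simp
  have hM : s.1.max' h ∈ ({i, j} : Finset (Fin n)) := by rw [← this]; simp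
  have hi : i ∈ ({s.1.min' h, s.1.max' h} : Finset (Fin n)) := by rw [this]; simp
  have hj : j ∈ ({s.1.min' h, s.1.max' h} : Finset (Fin n)) := by rw [this]; simp
  simp only [Finset.mem_insert, Finset.mem_singleton] at hm hM hi hj
  unfold msymOf
  rcases hm with h1 | h1 <;> rcases hM with h2 | h2
  · exact absurd (h1.trans h2.symm) hne
  · rw [h1, h2]
  · rw [h1, h2]; exact msym_comm F j i
  · exact absurd (h1.trans h2.symm) hne

lemma vmv_mul (F : Type*) [Field F] {n : ℕ} (u v p q : Fin n → F) :
    vecMulVec u v * vecMulVec p q = (v ⬝ᵥ p) • vecMulVec u q := by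
  ext i j
  simp only [mul_apply, vecMulVec_apply, Matrix.smul_apply, smul_eq_mul, dotProduct, Finset.sum_mul]
  exact Finset.sum_congr rfl fun k _ => by ring

-- basis vector
def wv (F : Type*) [Field F] {n : ℕ} (i j : Fin n) : Fin n → F :=
  Pi.single i 1 - Pi.single j 1

lemma wv_dot (F : Type*) [Field F] {n : ℕ} (i j k l : Fin n) :
    wv F i j ⬝ᵥ wv F k l = (if i = k then (1:F) else 0) - (if i = l then 1 else 0)
      - (if j = k then 1 else 0) + (if j = l then 1 else 0) := by
  simp only [wv, dotProduct, Pi.sub_apply, Pi.single_apply]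
  rw [Finset.sum_congr rfl (fun a _ => show _ = ((if a = i then (1:F) else 0) * (if a = k then 1 else 0))
      - ((if a = i then (1:F) else 0) * (if a = l then 1 else 0))
      - ((if a = j then (1:F) else 0) * (if a = k then 1 else 0))
      + ((if a = j then (1:F) else 0) * (if a = l then 1 else 0)) from by ring)]
  simp [ite_mul, Finset.sum_sub_distrib, Finset.sum_add_distrib, Finset.sum_ite_eq,
    Finset.sum_ite_eq', eq_comm]

lemma msym_eq' (F : Type*) [Field F] {n : ℕ} (i j : Fin n) :
    msym F i j = (2⁻¹ : F) • vecMulVec (wv F i j) (wv F i j) := msym_eq F i j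

lemma msym_mul (F : Type*) [Field F] {n : ℕ} (i j k l : Fin n) :
    msym F i j * msym F k l
      = ((4⁻¹ : F) * (wv F i j ⬝ᵥ wv F k l)) • vecMulVec (wv F i j) (wv F k l) := by
  rw [msym_eq', msym_eq', smul_mul_assoc, mul_smul_comm, smul_smul, vmv_mul, smul_smul]
  congr 1
  rw [show ((4:F))⁻¹ = 2⁻¹ * 2⁻¹ by rw [← mul_inv]; norm_num]

lemma jordan_same (F : Type*) [Field F] (h2 : (2:F) ≠ 0) {n : ℕ} (i j : Fin n) (hij : i ≠ j) :
    (2⁻¹ : F) • (msym F i j * msym F i j + msym F i j * msym F i j) = msym F i j := by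
  have hd : wv F i j ⬝ᵥ wv F i j = 2 := by
    rw [wv_dot]; simp [hij, Ne.symm hij]; norm_num
  rw [msym_mul, hd, msym_eq']
  rw [← add_smul, smul_smul]
  congr 1
  have h4 : (4:F) ≠ 0 := by
    rw [show (4:F) = 2 * 2 by norm_num]; exact mul_ne_zero h2 h2
  field_simp
  ring

lemma jordan_disj (F : Type*) [Field F] {n : ℕ} (i j k l : Fin n)
    (h1 : i ≠ k) (h2 : i ≠ l) (h3 : j ≠ k) (h4 : j ≠ l) :
    (2⁻¹ : F) • (msym F i j * msym F k l + msym F k l * msym F i j) = 0 := by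
  have hd : wv F i j ⬝ᵥ wv F k l = 0 := by rw [wv_dot]; simp [h1, h2, h3, h4]
  have hd' : wv F k l ⬝ᵥ wv F i j = 0 := by
    rw [wv_dot]; simp [h1.symm, h2.symm, h3.symm, h4.symm]
  rw [msym_mul, msym_mul, hd, hd']
  simp

lemma jordan_overlap (F : Type*) [Field F] {n : ℕ} (a b c : Fin n)
    (hab : a ≠ b) (hbc : b ≠ c) (hac : a ≠ c) :
    (2⁻¹ : F) • (msym F a b * msym F b c + msym F b c * msym F a b)
      = (4⁻¹ : F) • (msym F a b + msym F b c - msym F a c) := by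
  have hd1 : wv F a b ⬝ᵥ wv F b c = -1 := by rw [wv_dot]; simp [hab, hbc, hac]
  have hd2 : wv F b c ⬝ᵥ wv F a b = -1 := by
    rw [wv_dot]; simp [hab.symm, hbc.symm, hac.symm]
  have hw : wv F a c = wv F a b + wv F b c := by unfold wv; abel
  rw [msym_mul, msym_mul, hd1, hd2, msym_eq', msym_eq', msym_eq' F a c, hw]
  ext x y
  simp only [Matrix.smul_apply, Matrix.add_apply, Matrix.sub_apply, vecMulVec_apply,
    Pi.add_apply, smul_eq_mul]
  ring

lemma pair_ext {α : Type*} [DecidableEq α] (a b c d : α) :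
    ({a, b} : Finset α) = {c, d} ↔ (a = c ∧ b = d) ∨ (a = d ∧ b = c) := by
  rw [← Finset.coe_inj]
  push_cast
  exact Set.pair_eq_pair_iff

lemma msym_transpose (F : Type*) [Field F] {n : ℕ} (i j : Fin n) :
    (msym F i j)ᵀ = msym F i j := by
  ext a b
  simp only [Matrix.transpose_apply, msym_eq', Matrix.smul_apply, vecMulVec_apply, smul_eq_mul]
  ring

lemma msym_rowsum (F : Type*) [Field F] {n : ℕ} (i j a : Fin n) :
    ∑ b, msym F i j a b = 0 := by
  simp only [msym_eq', Matrix.smul_apply, vecMulVec_apply, smul_eq_mul]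
  rw [← Finset.mul_sum, ← Finset.mul_sum]
  have : ∑ b, wv F i j b = 0 := by
    simp [wv, Finset.sum_sub_distrib, Pi.single_apply, Finset.sum_ite_eq', Finset.sum_ite_eq]
  rw [this, mul_zero, mul_zero]

lemma msym_offdiag (F : Type*) [Field F] {n : ℕ} (k l i j : Fin n)
    (hkl : k ≠ l) (hij : i ≠ j) :
    msym F k l i j = if ({k, l} : Finset (Fin n)) = {i, j} then -2⁻¹ else 0 := by
  simp only [pair_ext]
  simp only [msym_eq', Matrix.smul_apply, vecMulVec_apply, smul_eq_mul, wv,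
    Pi.sub_apply, Pi.single_apply]
  by_cases h1 : i = k <;> by_cases h2 : i = l <;> by_cases h3 : j = k <;> by_cases h4 : j = l <;>
    simp_all [eq_comm] <;> ring

lemma msym_diag (F : Type*) [Field F] {n : ℕ} (k l a : Fin n) (hkl : k ≠ l) :
    msym F k l a a = if a = k ∨ a = l then 2⁻¹ else 0 := by
  simp only [msym_eq', Matrix.smul_apply, vecMulVec_apply, smul_eq_mul, wv,
    Pi.sub_apply, Pi.single_apply]
  by_cases h1 : a = k <;> by_cases h2 : a = l <;> simp_all [eq_comm] <;> ring

noncomputable def etaL (F : Type*) [Field F] (n : ℕ) :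
    ({s : Finset (Fin n) // s.card = 2} → F) →ₗ[F] Matrix (Fin n) (Fin n) F where
  toFun x := ∑ s : {s : Finset (Fin n) // s.card = 2}, x s • msymOf F s
  map_add' x y := by
    simp [add_smul, Finset.sum_add_distrib]
  map_smul' c x := by
    simp [smul_smul, Finset.smul_sum]

lemma etaL_single (F : Type*) [Field F] (n : ℕ) (s : {s : Finset (Fin n) // s.card = 2}) :
    etaL F n (Pi.single s 1) = msymOf F s := by
  simp only [etaL, LinearMap.coe_mk, AddHom.coe_mk, Pi.single_apply]
  rw [Finset.sum_congr rfl (fun t _ => by rw [ite_smul, one_smul, zero_smul])]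
  simp [Finset.sum_ite_eq, Finset.sum_ite_eq']

-- a card-two set containing b
lemma card2_mem {n : ℕ} (s : Finset (Fin n)) (hs : s.card = 2) (b : Fin n) (hb : b ∈ s) :
    ∃ a, a ≠ b ∧ s = {b, a} := by
  obtain ⟨u, v, huv, rfl⟩ := Finset.card_eq_two.mp hs
  simp only [Finset.mem_insert, Finset.mem_singleton] at hb
  rcases hb with rfl | rfl
  · exact ⟨v, huv.symm, rfl⟩
  · exact ⟨u, huv, Finset.pair_comm u b⟩

lemma key_pair (F : Type*) [Field F] (h2 : (2:F) ≠ 0) (n : ℕ)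
    (s t : {s : Finset (Fin n) // s.card = 2}) :
    etaL F n
      (if s = t then Pi.single s (1 : F)
       else if (s : Finset (Fin n)) ∩ (t : Finset (Fin n)) = ∅ then
         (0 : {s : Finset (Fin n) // s.card = 2} → F)
       else (4⁻¹ : F) • (Pi.single s (1 : F) + Pi.single t (1 : F) -
         fun r : {s : Finset (Fin n) // s.card = 2} =>
           if (r : Finset (Fin n)) = symmDiff (s : Finset (Fin n)) (t : Finset (Fin n))
           then (1 : F) else 0))
    = (2⁻¹ : F) • (msymOf F s * msymOf F t + msymOf F t * msymOf F s) := by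
  by_cases hst : s = t
  · subst hst
    rw [if_pos rfl, etaL_single]
    obtain ⟨h, hne, _⟩ := card2_min_max s.1 s.2
    exact (jordan_same F h2 _ _ hne).symm
  · rw [if_neg hst]
    by_cases hdisj : (s : Finset (Fin n)) ∩ (t : Finset (Fin n)) = ∅
    · rw [if_pos hdisj, map_zero]
      obtain ⟨i, j, hij, hs⟩ := Finset.card_eq_two.mp s.2
      obtain ⟨k, l, hkl, ht⟩ := Finset.card_eq_two.mp t.2
      have hd : ∀ x ∈ s.1, x ∉ t.1 := by
        intro x hx hx'
        exact absurd (Finset.mem_inter.mpr ⟨hx, hx'⟩) (by rw [hdisj]; simp)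
      have hik : i ≠ k := fun h => hd i (by rw [hs]; simp) (by rw [ht, h]; simp)
      have hil : i ≠ l := fun h => hd i (by rw [hs]; simp) (by rw [ht, h]; simp)
      have hjk : j ≠ k := fun h => hd j (by rw [hs]; simp) (by rw [ht, h]; simp)
      have hjl : j ≠ l := fun h => hd j (by rw [hs]; simp) (by rw [ht, h]; simp)
      rw [msymOf_eq F s i j hij hs, msymOf_eq F t k l hkl ht]
      exact (jordan_disj F i j k l hik hil hjk hjl).symm
    · rw [if_neg hdisj]
      obtain ⟨b, hb⟩ := Finset.nonempty_iff_ne_empty.mpr hdisj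
      rw [Finset.mem_inter] at hb
      obtain ⟨a, hab, hs⟩ := card2_mem s.1 s.2 b hb.1
      obtain ⟨c, hcb, ht⟩ := card2_mem t.1 t.2 b hb.2
      have hac : a ≠ c := by
        intro h
        exact hst (Subtype.ext (by rw [hs, ht, h]))
      have hsd : symmDiff (s : Finset (Fin n)) (t : Finset (Fin n)) = {a, c} := by
        ext x
        rw [Finset.mem_symmDiff, hs, ht]
        simp only [Finset.mem_insert, Finset.mem_singleton]
        constructor
        · rintro (⟨rfl | rfl, hx⟩ | ⟨rfl | rfl, hx⟩) <;> tauto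
        · rintro (rfl | rfl)
          · exact Or.inl ⟨Or.inr rfl, fun h => by rcases h with h | h; exacts [hab h, hac h]⟩
          · exact Or.inr ⟨Or.inr rfl, fun h => by rcases h with h | h; exacts [hcb h, hac h.symm]⟩
      have hu : ({a, c} : Finset (Fin n)).card = 2 := Finset.card_eq_two.mpr ⟨a, c, hac, rfl⟩
      have hind : (fun r : {s : Finset (Fin n) // s.card = 2} =>
          if (r : Finset (Fin n)) = symmDiff (s : Finset (Fin n)) (t : Finset (Fin n))
          then (1 : F) else 0) = Pi.single (⟨{a, c}, hu⟩ : {s : Finset (Fin n) // s.card = 2}) 1 := by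
        funext r
        rw [Pi.single_apply, hsd]
        congr 1
        simp [Subtype.ext_iff]
      rw [hind, _root_.map_smul, map_sub, map_add, etaL_single, etaL_single, etaL_single]
      rw [msymOf_eq F s a b (fun h => hab h) (hs.trans (Finset.pair_comm b a)),
        msymOf_eq F t b c (fun h => hcb h.symm) ht,
        msymOf_eq F _ a c hac rfl]
      exact (jordan_overlap F a b c hab (fun h => hcb h.symm) hac).symm

lemma eta_mul (F : Type*) [Field F] (h2 : (2:F) ≠ 0) (n : ℕ)
    (x y : {s : Finset (Fin n) // s.card = 2} → F) :
    etaL F n (pairMul F n x y)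
      = (2⁻¹ : F) • (etaL F n x * etaL F n y + etaL F n y * etaL F n x) := by
  rw [pairMul, map_sum]
  simp_rw [map_sum, _root_.map_smul, key_pair F h2 n]
  have hx : etaL F n x = ∑ s, x s • msymOf F s := rfl
  have hy : etaL F n y = ∑ s, y s • msymOf F s := rfl
  rw [hx, hy, Finset.sum_mul_sum, Finset.sum_mul_sum,
    Finset.sum_comm (s := (Finset.univ : Finset {s : Finset (Fin n) // s.card = 2}))
      (t := (Finset.univ : Finset {s : Finset (Fin n) // s.card = 2}))
      (f := fun i j => (y i • msymOf F i) * (x j • msymOf F j)),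
    ← Finset.sum_add_distrib, Finset.smul_sum]
  refine Finset.sum_congr rfl fun s _ => ?_
  rw [← Finset.sum_add_distrib, Finset.smul_sum]
  refine Finset.sum_congr rfl fun t _ => ?_
  simp only [smul_mul_assoc, mul_smul_comm, smul_smul, smul_add]
  rw [mul_comm (y t) (x s), mul_comm (x s * y t) 2⁻¹]

lemma msymOf_offdiag (F : Type*) [Field F] {n : ℕ} (t : {s : Finset (Fin n) // s.card = 2})
    (i j : Fin n) (hij : i ≠ j) :
    msymOf F t i j = if t.1 = ({i, j} : Finset (Fin n)) then -2⁻¹ else 0 := by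
  obtain ⟨k, l, hkl, ht⟩ := Finset.card_eq_two.mp t.2
  rw [msymOf_eq F t k l hkl ht, msym_offdiag F k l i j hkl hij, ht]

lemma msymOf_diag (F : Type*) [Field F] {n : ℕ} (t : {s : Finset (Fin n) // s.card = 2})
    (a : Fin n) :
    msymOf F t a a = if a ∈ t.1 then 2⁻¹ else 0 := by
  obtain ⟨k, l, hkl, ht⟩ := Finset.card_eq_two.mp t.2
  rw [msymOf_eq F t k l hkl ht, msym_diag F k l a hkl, ht]
  simp

lemma eta_offdiag (F : Type*) [Field F] {n : ℕ} (x : {s : Finset (Fin n) // s.card = 2} → F)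
    (i j : Fin n) (hij : i ≠ j) (s : {s : Finset (Fin n) // s.card = 2})
    (hs : s.1 = ({i, j} : Finset (Fin n))) :
    etaL F n x i j = -2⁻¹ * x s := by
  have : etaL F n x = ∑ t, x t • msymOf F t := rfl
  rw [this, Matrix.sum_apply]
  simp only [Matrix.smul_apply, smul_eq_mul, msymOf_offdiag F _ i j hij]
  rw [Finset.sum_congr rfl (fun t _ => show x t * _ = if t = s then x t * -2⁻¹ else 0 by
    by_cases h : t = s
    · subst h; rw [if_pos rfl, if_pos hs]
    · rw [if_neg h, if_neg (fun hh => h (Subtype.ext (hh.trans hs.symm))), mul_zero])]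
  rw [Finset.sum_ite_eq']
  simp [mul_comm]

lemma sym_pair {n : ℕ} (F : Type*) [Field F] (X : Matrix (Fin n) (Fin n) F) (hX : Xᵀ = X)
    (m M i j : Fin n) (h : ({m, M} : Finset (Fin n)) = {i, j}) : X m M = X i j := by
  rcases (pair_ext m M i j).mp h with ⟨rfl, rfl⟩ | ⟨rfl, rfl⟩
  · rfl
  · conv_rhs => rw [← hX]
    rfl

lemma eta_inj (F : Type*) [Field F] (h2 : (2:F) ≠ 0) (n : ℕ) :
    Function.Injective (etaL F n) := by
  intro x y h
  funext s
  obtain ⟨hne, hmm, hrepr⟩ := card2_min_max s.1 s.2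
  have h1 := eta_offdiag F x _ _ hmm s hrepr
  have h2' := eta_offdiag F y _ _ hmm s hrepr
  have : (-2⁻¹ : F) * x s = -2⁻¹ * y s := by rw [← h1, ← h2', h]
  have hinv : (-2⁻¹ : F) ≠ 0 := neg_ne_zero.mpr (inv_ne_zero h2)
  exact mul_left_cancel₀ hinv this

lemma eta_transpose (F : Type*) [Field F] (n : ℕ) (x : {s : Finset (Fin n) // s.card = 2} → F) :
    (etaL F n x)ᵀ = etaL F n x := by
  have : etaL F n x = ∑ t, x t • msymOf F t := rfl
  rw [this, Matrix.transpose_sum]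
  refine Finset.sum_congr rfl fun t _ => ?_
  rw [Matrix.transpose_smul]
  unfold msymOf
  rw [msym_transpose]

lemma eta_rowsum (F : Type*) [Field F] (n : ℕ) (x : {s : Finset (Fin n) // s.card = 2} → F)
    (i : Fin n) : ∑ j, etaL F n x i j = 0 := by
  have : etaL F n x = ∑ t, x t • msymOf F t := rfl
  rw [this]
  simp only [Matrix.sum_apply, Matrix.smul_apply, smul_eq_mul]
  rw [Finset.sum_comm]
  rw [Finset.sum_congr rfl fun t _ => show ∑ j, x t * msymOf F t i j = 0 by
    rw [← Finset.mul_sum]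
    unfold msymOf
    rw [msym_rowsum, mul_zero]]
  simp

lemma erase_repr {n : ℕ} (t : Finset (Fin n)) (ht : t.card = 2) (i : Fin n) (hit : i ∈ t) :
    ∃ (hne : (t.erase i).Nonempty), t.erase i = {(t.erase i).min' hne} ∧
      t = {i, (t.erase i).min' hne} ∧ (t.erase i).min' hne ≠ i := by
  have hc : (t.erase i).card = 1 := by rw [Finset.card_erase_of_mem hit, ht]
  obtain ⟨b, hb⟩ := Finset.card_eq_one.mp hc
  have hne : (t.erase i).Nonempty := by rw [hb]; exact ⟨b, Finset.mem_singleton_self b⟩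
  have hmin : (t.erase i).min' hne = b := le_antisymm
    (Finset.min'_le _ b (by rw [hb]; exact Finset.mem_singleton_self b))
    (Finset.le_min' _ _ _ (fun y hy => le_of_eq (Finset.mem_singleton.mp (by rwa [hb] at hy)).symm))
  have hbi : b ≠ i := (Finset.mem_erase.mp (hb ▸ Finset.mem_singleton_self b)).1
  refine ⟨hne, ?_, ?_, by rw [hmin]; exact hbi⟩
  · rw [hmin]; exact hb
  · rw [hmin, ← Finset.insert_erase hit, hb]

lemma eta_surj (F : Type*) [Field F] (h2 : (2:F) ≠ 0) (n : ℕ)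
    (X : Matrix (Fin n) (Fin n) F) (hX : Xᵀ = X) (hrow : ∀ i, ∑ j, X i j = 0) :
    ∃ x, etaL F n x = X := by
  set xx : {s : Finset (Fin n) // s.card = 2} → F :=
    fun s => (-2 : F) * X (s.1.min' (Finset.card_pos.mp (by rw [s.2]; norm_num)))
      (s.1.max' (Finset.card_pos.mp (by rw [s.2]; norm_num))) with hxx
  have hval : ∀ (t : {s : Finset (Fin n) // s.card = 2}) (i j : Fin n), i ≠ j →
      t.1 = {i, j} → xx t = (-2 : F) * X i j := by
    intro t i j hij ht
    obtain ⟨hne, hmm, hrepr⟩ := card2_min_max t.1 t.2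
    rw [hxx]
    simp only
    rw [sym_pair F X hX _ _ i j (hrepr.symm.trans ht)]
  refine ⟨xx, ?_⟩
  ext i j
  by_cases hij : i = j
  · subst hij
    have heq : etaL F n xx = ∑ t, xx t • msymOf F t := rfl
    rw [heq, Matrix.sum_apply]
    simp only [Matrix.smul_apply, smul_eq_mul, msymOf_diag F _ i]
    rw [Finset.sum_congr rfl (fun t _ => by rw [mul_ite, mul_zero]), Finset.sum_ite,
      Finset.sum_const_zero, add_zero]
    rw [Finset.sum_bij (g := fun (j : Fin n) => -X i j) (t := Finset.univ.erase i)
      (i := fun (t : {s : Finset (Fin n) // s.card = 2})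
        (ht : t ∈ Finset.univ.filter (fun t : {s : Finset (Fin n) // s.card = 2} => i ∈ t.1)) =>
        (t.1.erase i).min' (Finset.card_pos.mp (by
          rw [Finset.card_erase_of_mem (Finset.mem_filter.mp ht).2, t.2]; norm_num)))
      (hi := ?_) (i_inj := ?_) (i_surj := ?_) (h := ?_)]
    · rw [Finset.sum_neg_distrib, Finset.sum_erase_eq_sub (Finset.mem_univ i), hrow i]
      ring
    · intro t ht
      obtain ⟨hne, _, _, hmi⟩ := erase_repr t.1 t.2 i (Finset.mem_filter.mp ht).2
      exact Finset.mem_erase.mpr ⟨hmi, Finset.mem_univ _⟩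
    · intro t1 ht1 t2 ht2 hmin
      obtain ⟨_, _, hr1, _⟩ := erase_repr t1.1 t1.2 i (Finset.mem_filter.mp ht1).2
      obtain ⟨_, _, hr2, _⟩ := erase_repr t2.1 t2.2 i (Finset.mem_filter.mp ht2).2
      exact Subtype.ext (hr1.trans ((congrArg (fun z => ({i, z} : Finset (Fin n))) hmin).trans
        hr2.symm))
    · intro j hj
      have hji : j ≠ i := (Finset.mem_erase.mp hj).1
      have hcard : ({i, j} : Finset (Fin n)).card = 2 :=
        Finset.card_eq_two.mpr ⟨i, j, hji.symm, rfl⟩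
      refine ⟨⟨{i, j}, hcard⟩, Finset.mem_filter.mpr ⟨Finset.mem_univ _, by simp⟩, ?_⟩
      have herase : (({i, j} : Finset (Fin n)).erase i) = {j} := by
        rw [show ({i, j} : Finset (Fin n)) = insert i {j} from rfl,
          Finset.erase_insert (by simp [hji.symm])]
      have hall : ∀ y ∈ (({i, j} : Finset (Fin n)).erase i), y = j := fun y hy =>
        Finset.mem_singleton.mp (by rwa [herase] at hy)
      exact hall _ (Finset.min'_mem _ _)
    · intro t ht
      obtain ⟨hne, _, hrt, hmi⟩ := erase_repr t.1 t.2 i (Finset.mem_filter.mp ht).2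
      rw [hval t i _ hmi.symm hrt]
      field_simp
  · have hs : (⟨{i, j}, Finset.card_eq_two.mpr ⟨i, j, hij, rfl⟩⟩ :
        {s : Finset (Fin n) // s.card = 2}).1 = ({i, j} : Finset (Fin n)) := rfl
    rw [eta_offdiag F _ i j hij _ hs, hval _ i j hij hs]
    field_simp

lemma jordan_matrix (F : Type*) [Field F] (h2 : (2:F) ≠ 0) {n : ℕ}
    (A B : Matrix (Fin n) (Fin n) F) :
    (2⁻¹:F) • (((2⁻¹:F) • (A*B+B*A)) * ((2⁻¹:F) • (A*A+A*A))
        + ((2⁻¹:F) • (A*A+A*A)) * ((2⁻¹:F) • (A*B+B*A)))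
      = (2⁻¹:F) • (A * ((2⁻¹:F) • (B * ((2⁻¹:F) • (A*A+A*A))
          + ((2⁻¹:F) • (A*A+A*A)) * B))
        + ((2⁻¹:F) • (B * ((2⁻¹:F) • (A*A+A*A)) + ((2⁻¹:F) • (A*A+A*A)) * B)) * A) := by
  have hAA : (2⁻¹:F) • (A*A+A*A) = A*A := by
    rw [← two_smul F (A*A), smul_smul, inv_mul_cancel₀ h2, one_smul]
  rw [hAA]
  simp only [smul_mul_assoc, mul_smul_comm, smul_smul, smul_add, add_mul, mul_add, mul_assoc]
  abel

/-- The `F`-linear map sending the basis element `{i,j}` of the Matsuo algebra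
`M_{1/2}(Sym(n), D)` to `m_{ij}` is an isomorphism of `F`-algebras onto the algebra of symmetric
zero-sum `n × n` matrices with the Jordan product `X ∙ Y = (1/2)(XY + YX)`.  In particular the
Matsuo algebra satisfies the Jordan identity `(ab)(aa) = a(b(aa))`. -/
theorem stmt_3 (F : Type*) [Field F] (h2 : (2 : F) ≠ 0) (n : ℕ) (hn : 1 ≤ n) :
    (let η : ({s : Finset (Fin n) // s.card = 2} → F) → Matrix (Fin n) (Fin n) F :=
      fun x => ∑ s : {s : Finset (Fin n) // s.card = 2}, x s • msymOf F s
    (∀ (c : F) (x y : {s : Finset (Fin n) // s.card = 2} → F),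
        η (c • x + y) = c • η x + η y) ∧
      Function.Injective η ∧
      Set.range η = {X : Matrix (Fin n) (Fin n) F | Xᵀ = X ∧ ∀ i, ∑ j, X i j = 0} ∧
      (∀ x y, η (pairMul F n x y) = (2⁻¹ : F) • (η x * η y + η y * η x))) ∧
    (∀ a b : {s : Finset (Fin n) // s.card = 2} → F,
      pairMul F n (pairMul F n a b) (pairMul F n a a) =
        pairMul F n a (pairMul F n b (pairMul F n a a))) := by
  constructor
  · intro η
    have hη : η = ⇑(etaL F n) := rfl
    rw [hη]
    refine ⟨?_, eta_inj F h2 n, ?_, fun x y => eta_mul F h2 n x y⟩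
    · intro c x y
      rw [map_add, _root_.map_smul]
    · ext X
      constructor
      · rintro ⟨x, rfl⟩
        exact ⟨eta_transpose F n x, eta_rowsum F n x⟩
      · rintro ⟨hX, hrow⟩
        exact eta_surj F h2 n X hX hrow
  · intro a b
    apply eta_inj F h2 n
    simp only [eta_mul F h2 n]
    exact jordan_matrix F h2 (etaL F n a) (etaL F n b)
end
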